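/- For every N ≥ 1 and every 0 ≤ s ≤ N, the N×N matrix C^{[N,s]} with entries C_{i,j} = binom(i+j, i) for 0 ≤ i ≤ N−s−1 and C_{i,j} = binom(i+j+1, i+1) for N−s ≤ i ≤ N−1, where 0 ≤ j ≤ N−1, has determinant det C^{[N,s]} = binom(N, s). -/

import Mathlib

open Finset

private lemma auxV (N a b : ℕ) (hb : b < N) :
    ((a + b).choose b : ℚ) = ∑ k ∈ range N, (a.choose k : ℚ) * (b.choose k) := by
  have h1 : (a + b).choose b = ∑ k ∈ range (b + 1), a.choose k * b.choose k := by
    rw [Nat.add_choose_eq, Finset.Nat.sum_antidiagonal_eq_sum_range_succ_mk]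
    refine Finset.sum_congr rfl fun k hk => ?_
    simp only [mem_range] at hk
    rw [Nat.choose_symm (by omega : k ≤ b)]
  have h2 : ((a + b).choose b : ℚ) = ∑ k ∈ range (b + 1), (a.choose k : ℚ) * (b.choose k) := by
    rw [h1]; push_cast; ring
  rw [h2]
  refine Finset.sum_subset (by rw [range_subset_range]; omega) fun k hk hk' => ?_
  simp only [mem_range] at hk hk'
  have : b < k := by omega
  simp [Nat.choose_eq_zero_of_lt this]

private lemma auxAlt (m : ℕ) :
    ∑ u ∈ range (m + 1), (-1 : ℚ) ^ u * ((m + 1).choose u) = -(-1 : ℚ) ^ (m + 1) := by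
  have h := Int.alternating_sum_range_choose_of_ne (Nat.succ_ne_zero m)
  have h2 : ∑ u ∈ range (m + 2), (-1 : ℚ) ^ u * ((m + 1).choose u) = 0 := by
    exact_mod_cast h
  rw [Finset.sum_range_succ] at h2
  simp only [Nat.choose_self, Nat.cast_one, mul_one] at h2
  linarith

private lemma auxW (N k : ℕ) (hk : k < N) :
    ∑ t ∈ range N, (-1 : ℚ) ^ (N - 1 - t) * (N.choose t) * (t.choose k) = N.choose k := by
  rw [← Finset.sum_range_add_sum_Ico _ hk.le]
  have hz : ∑ t ∈ range k, (-1 : ℚ) ^ (N - 1 - t) * (N.choose t) * (t.choose k) = 0 := by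
    refine Finset.sum_eq_zero fun t ht => ?_
    simp only [mem_range] at ht
    simp [Nat.choose_eq_zero_of_lt ht]
  rw [hz, zero_add, Finset.sum_Ico_eq_sum_range]
  have key : ∀ u ∈ range (N - k), (-1 : ℚ) ^ (N - 1 - (k + u)) * (N.choose (k + u)) * ((k + u).choose k)
      = ((N.choose k : ℚ) * (-1) ^ (N - 1 - k)) * ((-1) ^ u * ((N - k).choose u)) := by
    intro u hu
    simp only [mem_range] at hu
    have h1 : (N.choose (k + u) : ℚ) * ((k + u).choose k) = (N.choose k : ℚ) * ((N - k).choose u) := by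
      have := Nat.choose_mul (n := N) (show k ≤ k + u by omega)
      rw [Nat.add_sub_cancel_left] at this
      exact_mod_cast congrArg (Nat.cast : ℕ → ℚ) this
    have h2 : (-1 : ℚ) ^ (N - 1 - (k + u)) = (-1) ^ (N - 1 - k) * (-1) ^ u := by
      have e : N - 1 - k = (N - 1 - (k + u)) + u := by omega
      rw [e, pow_add, mul_assoc, ← mul_pow]
      norm_num
    rw [mul_assoc, h1, h2]; ring
  rw [Finset.sum_congr rfl key, ← Finset.mul_sum]
  obtain ⟨m, hm⟩ : ∃ m, N - k = m + 1 := ⟨N - k - 1, by omega⟩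
  rw [hm, auxAlt]
  have e : (N - 1 - k) + (m + 1) = 2 * (m + 1) - 1 := by omega
  have : (-1 : ℚ) ^ (N - 1 - k) * -(-1 : ℚ) ^ (m + 1) = 1 := by
    rw [← neg_mul_comm, neg_mul, ← pow_add, e]
    obtain ⟨p, hp⟩ : ∃ p, 2 * (m + 1) - 1 = 2 * p + 1 := ⟨m, by omega⟩
    rw [hp, pow_succ, pow_mul]
    norm_num
  rw [mul_assoc, this, mul_one]


theorem stmt12 (N s : ℕ) (hN : 1 ≤ N) (hs : s ≤ N) :
    Matrix.det (Matrix.of fun i j : Fin N =>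
      if (i : ℕ) < N - s then (Nat.choose ((i : ℕ) + (j : ℕ)) (i : ℕ) : ℚ)
      else (Nat.choose ((i : ℕ) + (j : ℕ) + 1) ((i : ℕ) + 1) : ℚ)) =
    (Nat.choose N s : ℚ) := by
  obtain ⟨n, rfl⟩ : ∃ n, N = n + 1 := ⟨N - 1, by omega⟩
  set P : Matrix (Fin (n + 1)) (Fin (n + 1)) ℚ :=
    Matrix.of fun i k => ((i : ℕ).choose k : ℚ) with hPdef
  set B : Matrix (Fin (n + 1)) (Fin (n + 1)) ℚ :=
    Matrix.of fun k j => ((j : ℕ).choose k : ℚ) with hBdef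
  set A : Matrix (Fin (n + 1)) (Fin (n + 1)) ℚ :=
    Matrix.of fun i k => if (i : ℕ) < n + 1 - s then ((i : ℕ).choose k : ℚ)
      else (((i : ℕ) + 1).choose k : ℚ) with hAdef
  set M : Matrix (Fin (n + 1)) (Fin (n + 1)) ℚ :=
    Matrix.of fun i k => if (i : ℕ) < n + 1 - s then (if (k : ℕ) = (i : ℕ) then 1 else 0)
      else if (i : ℕ) < n then (if (k : ℕ) = (i : ℕ) + 1 then 1 else 0)
      else (-1 : ℚ) ^ (n - (k : ℕ)) * ((n + 1).choose k) with hMdef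
  -- A * B = C
  have hAB : A * B = Matrix.of fun i j : Fin (n + 1) =>
      if (i : ℕ) < n + 1 - s then (Nat.choose ((i : ℕ) + (j : ℕ)) (i : ℕ) : ℚ)
      else (Nat.choose ((i : ℕ) + (j : ℕ) + 1) ((i : ℕ) + 1) : ℚ) := by
    ext i j
    rw [Matrix.mul_apply]
    simp only [hAdef, hBdef, Matrix.of_apply]
    rw [Fin.sum_univ_eq_sum_range (fun k => (if (i : ℕ) < n + 1 - s then ((i : ℕ).choose k : ℚ)
      else (((i : ℕ) + 1).choose k : ℚ)) * ((j : ℕ).choose k : ℚ))]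
    by_cases h : (i : ℕ) < n + 1 - s
    · simp only [h, if_true]
      rw [← auxV (n + 1) (i : ℕ) (j : ℕ) j.isLt, Nat.choose_symm_add]
    · simp only [h, if_false]
      rw [← auxV (n + 1) ((i : ℕ) + 1) (j : ℕ) j.isLt]
      have h3 : ((i : ℕ) + 1 + (j : ℕ)).choose (j : ℕ)
          = ((i : ℕ) + (j : ℕ) + 1).choose ((i : ℕ) + 1) := by
        rw [Nat.choose_symm_of_eq_add
          (show (i : ℕ) + 1 + (j : ℕ) = (j : ℕ) + ((i : ℕ) + 1) by ring)]
        congr 1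
        omega
      exact_mod_cast h3
  -- M * P = A
  have hMP : M * P = A := by
    ext i k
    rw [Matrix.mul_apply]
    simp only [hMdef, hPdef, hAdef, Matrix.of_apply]
    by_cases h : (i : ℕ) < n + 1 - s
    · simp only [h, if_true]
      rw [Finset.sum_eq_single_of_mem i (Finset.mem_univ i)]
      · simp
      · intro t _ ht
        have : (t : ℕ) ≠ (i : ℕ) := fun e => ht (Fin.ext e)
        simp [this]
    · simp only [h, if_false]
      by_cases h2 : (i : ℕ) < n
      · simp only [h2, if_true]
        have hlt : (i : ℕ) + 1 < n + 1 := by omega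
        rw [Finset.sum_eq_single_of_mem ⟨(i : ℕ) + 1, hlt⟩ (Finset.mem_univ _)]
        · simp
        · intro t _ ht
          have : (t : ℕ) ≠ (i : ℕ) + 1 := by
            intro e; exact ht (Fin.ext (by simpa using e))
          simp [this]
      · simp only [h2, if_false]
        rw [Fin.sum_univ_eq_sum_range (fun t => ((-1 : ℚ) ^ (n - t) * ((n + 1).choose t)) * ((t : ℕ).choose k : ℚ))]
        have hi : (i : ℕ) = n := by omega
        calc ∑ t ∈ range (n + 1), ((-1 : ℚ) ^ (n - t) * ((n + 1).choose t)) * ((t : ℕ).choose k : ℚ)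
            = ∑ t ∈ range (n + 1), (-1 : ℚ) ^ (n + 1 - 1 - t) * ((n + 1).choose t) * ((t : ℕ).choose k : ℚ) := by
              refine Finset.sum_congr rfl fun t ht => by norm_num
          _ = ((n + 1).choose k : ℚ) := auxW (n + 1) k k.isLt
          _ = (((i : ℕ) + 1).choose k : ℚ) := by rw [hi]
  -- det P = 1
  have hdetP : P.det = 1 := by
    rw [Matrix.det_of_lowerTriangular P]
    · refine Finset.prod_eq_one fun i _ => by simp [hPdef]
    · intro i j hij
      simp only [hPdef, Matrix.of_apply]
      exact_mod_cast congrArg (Nat.cast : ℕ → ℚ)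
        (Nat.choose_eq_zero_of_lt (show (i : ℕ) < (j : ℕ) from hij))
  -- det B = 1
  have hdetB : B.det = 1 := by
    rw [Matrix.det_of_upperTriangular]
    · refine Finset.prod_eq_one fun i _ => by simp [hBdef]
    · intro i j hij
      simp only [hBdef, Matrix.of_apply]
      exact_mod_cast congrArg (Nat.cast : ℕ → ℚ)
        (Nat.choose_eq_zero_of_lt (show (j : ℕ) < (i : ℕ) from hij))
  -- det M = choose (n+1) s
  have hdetM : M.det = ((n + 1).choose s : ℚ) := by
    rcases Nat.eq_zero_or_pos s with hs0 | hs1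
    · subst hs0
      have : M = 1 := by
        ext i k
        have hi : (i : ℕ) < n + 1 - 0 := by omega
        rw [hMdef]
        simp only [Matrix.of_apply, hi, if_true, Matrix.one_apply]
        by_cases h : k = i
        · subst h; simp
        · rw [if_neg (fun e => h (Fin.ext e)), if_neg (fun e => h (by rw [e]))]
      rw [this, Matrix.det_one, Nat.choose_zero_right, Nat.cast_one]
    · set j0 : Fin (n + 1) := ⟨n + 1 - s, by omega⟩ with hj0
      rw [Matrix.det_succ_column M j0]
      rw [Finset.sum_eq_single_of_mem (Fin.last n) (Finset.mem_univ _)]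
      · have hMl : M (Fin.last n) j0 = (-1 : ℚ) ^ (s - 1) * ((n + 1).choose (n + 1 - s)) := by
          simp only [hMdef, Matrix.of_apply, hj0]
          have h1 : ¬ ((Fin.last n : Fin (n + 1)) : ℕ) < n + 1 - s := by
            rw [Fin.val_last]; omega
          have h2 : ¬ ((Fin.last n : Fin (n + 1)) : ℕ) < n := by
            rw [Fin.val_last]; omega
          simp only [h1, h2, if_false]
          rw [show n - (n + 1 - s) = s - 1 by omega]
        have hsub : M.submatrix (Fin.last n).succAbove j0.succAbove = 1 := by
          ext a b
          rw [Matrix.submatrix_apply, Fin.succAbove_last]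
          have hb : ((j0.succAbove b : Fin (n + 1)) : ℕ) =
              if (b : ℕ) < n + 1 - s then (b : ℕ) else (b : ℕ) + 1 := by
            rw [Fin.succAbove]
            split_ifs with h h' h'
            · rfl
            · exfalso; apply h'; simpa [hj0, Fin.lt_def] using h
            · exfalso; apply h; simpa [hj0, Fin.lt_def] using h'
            · rfl
          simp only [hMdef, Matrix.of_apply, Fin.coe_castSucc, Matrix.one_apply]
          by_cases ha : (a : ℕ) < n + 1 - s
          · simp only [ha, if_true, hb]
            by_cases hab : a = b
            · subst hab; simp [ha]
            · have : (a : ℕ) ≠ (b : ℕ) := fun e => hab (Fin.ext e)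
              split_ifs with h1 h2 h2 <;> simp_all <;> omega
          · have ha2 : (a : ℕ) < n := by have := a.isLt; omega
            simp only [ha, if_false, ha2, if_true, hb]
            by_cases hab : a = b
            · subst hab; simp [ha]
            · have : (a : ℕ) ≠ (b : ℕ) := fun e => hab (Fin.ext e)
              split_ifs with h1 h2 h2 <;> simp_all <;> omega
        rw [hMl, hsub, Matrix.det_one, mul_one]
        have hval : ((Fin.last n : Fin (n + 1)) : ℕ) + (j0 : ℕ) = n + (n + 1 - s) := by
          rw [Fin.val_last]
        rw [hval]
        have hsymm : (n + 1).choose (n + 1 - s) = (n + 1).choose s := Nat.choose_symm hs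
        rw [hsymm]
        have hsign : (-1 : ℚ) ^ (n + (n + 1 - s)) * (-1 : ℚ) ^ (s - 1) = 1 := by
          rw [← pow_add]
          have e : n + (n + 1 - s) + (s - 1) = 2 * n := by omega
          rw [e, pow_mul]
          norm_num
        rw [← mul_assoc, hsign, one_mul]
      · intro i _ hi
        have hMz : M i j0 = 0 := by
          simp only [hMdef, Matrix.of_apply, hj0]
          have hin : (i : ℕ) ≠ n := fun e => hi (Fin.ext (by simp [Fin.last, e]))
          by_cases h : (i : ℕ) < n + 1 - s
          · simp only [h, if_true]
            rw [if_neg]; omega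
          · have h2 : (i : ℕ) < n := by have := i.isLt; omega
            simp only [h, if_false, h2, if_true]
            rw [if_neg]; omega
        rw [hMz]; ring
  -- conclude
  have hC : (Matrix.of fun i j : Fin (n + 1) =>
      if (i : ℕ) < n + 1 - s then (Nat.choose ((i : ℕ) + (j : ℕ)) (i : ℕ) : ℚ)
      else (Nat.choose ((i : ℕ) + (j : ℕ) + 1) ((i : ℕ) + 1) : ℚ)) = M * P * B := by
    rw [hMP, hAB]
  rw [hC, Matrix.det_mul, Matrix.det_mul, hdetP, hdetB, hdetM]
  ring
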